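/- Let H₁ and H₂ be separable real Hilbert spaces, and let (X,Y) be a pair of random variables in H₁×H₂ with E‖X‖² < ∞ and E‖Y‖² < ∞, so that the Bochner expectations EX ∈ H₁ and EY ∈ H₂ exist. Let (e_i)_i and (f_j)_j be Hilbert (orthonormal) bases of H₁ and H₂. Then, for β = 2: (a) t̃_X = −2·⟨X₁−EX, X₂−EX⟩ almost surely and t̃_Y = −2·⟨Y₁−EY, Y₂−EY⟩ almost surely; and (b) E[t̃_X t̃_Y] = 4·Σ_{i,j} Cov(⟨X,e_i⟩, ⟨Y,f_j⟩)², where the double series on the right converges. -/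

import Mathlib

open MeasureTheory ProbabilityTheory
open scoped RealInnerProductSpace

noncomputable section

/-- `ĥ_X := ‖X₁−X₂‖² − ‖X₂−X₃‖² + ‖X₃−X₄‖² − ‖X₄−X₁‖²` (the case `β = 2`), built from
four (independent) copies `X 0, X 1, X 2, X 3` of a random variable. -/
def hHat2 {Ω 𝒳 : Type*} [MetricSpace 𝒳] (X : Fin 4 → Ω → 𝒳) (ω : Ω) : ℝ :=
  dist (X 0 ω) (X 1 ω) ^ 2 - dist (X 1 ω) (X 2 ω) ^ 2
    + dist (X 2 ω) (X 3 ω) ^ 2 - dist (X 3 ω) (X 0 ω) ^ 2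

/-- `t̃_X := E(ĥ_X | X₁, X₂)` for `β = 2`. -/
def tTilde2 {Ω 𝒳 : Type*} [MetricSpace 𝒳] [MeasurableSpace 𝒳]
    {mΩ : MeasurableSpace Ω} (μ : Measure Ω) (X : Fin 4 → Ω → 𝒳) : Ω → ℝ :=
  μ[hHat2 X | MeasurableSpace.comap (fun ω => (X 0 ω, X 1 ω)) inferInstance]

section Auxiliary

set_option linter.unusedSectionVars false

variable {Ω : Type*} [MeasurableSpace Ω] {μ : Measure Ω} [IsProbabilityMeasure μ]
variable {H : Type*} [NormedAddCommGroup H] [InnerProductSpace ℝ H] [CompleteSpace H]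
  [SecondCountableTopology H] [MeasurableSpace H] [BorelSpace H]

lemma HilbertBasis.countable_index {ι : Type*} (e : HilbertBasis ι ℝ H) : Countable ι := by
  have hsep : TopologicalSpace.SeparableSpace H := inferInstance
  refine Pairwise.countable_of_isOpen_disjoint
    (s := fun i => Metric.ball (e i) (2⁻¹ : ℝ)) ?_ (fun i => Metric.isOpen_ball)
    (fun i => Metric.nonempty_ball.2 (by norm_num))
  intro i j hij
  apply Metric.ball_disjoint_ball
  have h2 : dist (e i) (e j) ^ 2 = 2 := by
    rw [dist_eq_norm, @norm_sub_sq_real]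
    simp [e.orthonormal.1 i, e.orthonormal.1 j, e.orthonormal.2 hij]; norm_num
  nlinarith [dist_nonneg (x := e i) (y := e j)]

/-- Finite Cauchy–Schwarz bound for basis coefficients. -/
lemma sum_abs_inner_mul_inner_le {ι : Type*} (e : HilbertBasis ι ℝ H) (u v : H)
    (s : Finset ι) : ∑ i ∈ s, |⟪u, e i⟫ * ⟪v, e i⟫| ≤ ‖u‖ * ‖v‖ := by
  have hcs := Finset.sum_mul_sq_le_sq_mul_sq s (fun i => |⟪u, e i⟫|) (fun i => |⟪v, e i⟫|)
  have hu : ∑ i ∈ s, |⟪u, e i⟫| ^ 2 ≤ ‖u‖ ^ 2 := by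
    have := e.orthonormal.sum_inner_products_le (s := s) u
    simpa [Real.norm_eq_abs, real_inner_comm] using this
  have hv : ∑ i ∈ s, |⟪v, e i⟫| ^ 2 ≤ ‖v‖ ^ 2 := by
    have := e.orthonormal.sum_inner_products_le (s := s) v
    simpa [Real.norm_eq_abs, real_inner_comm] using this
  have h1 : (∑ i ∈ s, |⟪u, e i⟫ * ⟪v, e i⟫|) ^ 2 ≤ (‖u‖ * ‖v‖) ^ 2 := by
    simp only [abs_mul]
    calc (∑ i ∈ s, |⟪u, e i⟫| * |⟪v, e i⟫|) ^ 2
        ≤ (∑ i ∈ s, |⟪u, e i⟫| ^ 2) * ∑ i ∈ s, |⟪v, e i⟫| ^ 2 := hcs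
      _ ≤ ‖u‖ ^ 2 * ‖v‖ ^ 2 := by
          apply mul_le_mul hu hv (Finset.sum_nonneg fun i _ => sq_nonneg _) (sq_nonneg _)
      _ = (‖u‖ * ‖v‖) ^ 2 := by ring
  have h0 : (0:ℝ) ≤ ∑ i ∈ s, |⟪u, e i⟫ * ⟪v, e i⟫| :=
    Finset.sum_nonneg fun i _ => abs_nonneg _
  nlinarith [mul_nonneg (norm_nonneg u) (norm_nonneg v)]

lemma summable_abs_inner_mul_inner {ι : Type*} (e : HilbertBasis ι ℝ H) (u v : H) :
    Summable (fun i => |⟪u, e i⟫ * ⟪v, e i⟫|) :=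
  summable_of_sum_le (fun i => abs_nonneg _) (fun s => sum_abs_inner_mul_inner_le e u v s)

lemma tsum_abs_inner_mul_inner_le {ι : Type*} (e : HilbertBasis ι ℝ H) (u v : H) :
    ∑' i, |⟪u, e i⟫ * ⟪v, e i⟫| ≤ ‖u‖ * ‖v‖ :=
  Summable.tsum_le_of_sum_le (summable_abs_inner_mul_inner e u v)
    (fun s => sum_abs_inner_mul_inner_le e u v s)




lemma integral_inner_indep {U V : Ω → H} (hU : Measurable U) (hV : Measurable V)
    (hUi : Integrable U μ) (hVi : Integrable V μ) (hUV : IndepFun U V μ) :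
    ∫ ω, ⟪U ω, V ω⟫ ∂μ = ⟪∫ ω, U ω ∂μ, ∫ ω, V ω ∂μ⟫ := by
  haveI : IsProbabilityMeasure (μ.map U) := Measure.isProbabilityMeasure_map hU.aemeasurable
  haveI : IsProbabilityMeasure (μ.map V) := Measure.isProbabilityMeasure_map hV.aemeasurable
  have hmap : μ.map (fun ω => (U ω, V ω)) = (μ.map U).prod (μ.map V) :=
    (indepFun_iff_map_prod_eq_prod_map_map hU.aemeasurable hV.aemeasurable).mp hUV
  have hpm : Measurable fun ω => (U ω, V ω) := hU.prodMk hV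
  have hcont : Continuous fun p : H × H => ⟪p.1, p.2⟫ := continuous_inner
  have hnU : Integrable (fun x : H => ‖x‖) (μ.map U) := by
    rw [integrable_map_measure (by fun_prop) hU.aemeasurable]
    exact hUi.norm
  have hnV : Integrable (fun x : H => ‖x‖) (μ.map V) := by
    rw [integrable_map_measure (by fun_prop) hV.aemeasurable]
    exact hVi.norm
  have hidU : Integrable (fun x : H => x) (μ.map U) := by
    rw [integrable_map_measure measurable_id'.aestronglyMeasurable hU.aemeasurable]
    exact hUi
  have hidV : Integrable (fun x : H => x) (μ.map V) := by
    rw [integrable_map_measure measurable_id'.aestronglyMeasurable hV.aemeasurable]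
    exact hVi
  have hprodint : Integrable (fun p : H × H => ⟪p.1, p.2⟫) ((μ.map U).prod (μ.map V)) := by
    refine Integrable.mono' (hnU.mul_prod hnV) hcont.aestronglyMeasurable ?_
    refine Filter.Eventually.of_forall fun p => ?_
    simpa using abs_real_inner_le_norm p.1 p.2
  calc ∫ ω, ⟪U ω, V ω⟫ ∂μ
      = ∫ p : H × H, ⟪p.1, p.2⟫ ∂(μ.map (fun ω => (U ω, V ω))) := by
        rw [integral_map hpm.aemeasurable hcont.aestronglyMeasurable]
    _ = ∫ p : H × H, ⟪p.1, p.2⟫ ∂((μ.map U).prod (μ.map V)) := by rw [hmap]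
    _ = ∫ x, ∫ y, ⟪x, y⟫ ∂(μ.map V) ∂(μ.map U) := integral_prod _ hprodint
    _ = ∫ x, ⟪x, ∫ y, y ∂(μ.map V)⟫ ∂(μ.map U) := by
        congr 1; ext x; exact integral_inner hidV x
    _ = ⟪∫ x, x ∂(μ.map U), ∫ y, y ∂(μ.map V)⟫ := by
        rw [show (fun x : H => ⟪x, ∫ y, y ∂(μ.map V)⟫)
            = fun x : H => ⟪∫ y, y ∂(μ.map V), x⟫ from funext fun x => real_inner_comm _ _]
        rw [integral_inner hidU, real_inner_comm]
    _ = ⟪∫ ω, U ω ∂μ, ∫ ω, V ω ∂μ⟫ := by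
        rw [integral_map hU.aemeasurable measurable_id'.aestronglyMeasurable,
          integral_map hV.aemeasurable measurable_id'.aestronglyMeasurable]

lemma integrable_inner_indep {U V : Ω → H} (hU : Measurable U) (hV : Measurable V)
    (hUn : Integrable (fun ω => ‖U ω‖) μ) (hVn : Integrable (fun ω => ‖V ω‖) μ)
    (hUV : IndepFun U V μ) :
    Integrable (fun ω => ⟪U ω, V ω⟫) μ := by
  have hind : IndepFun (fun ω => ‖U ω‖) (fun ω => ‖V ω‖) μ :=
    hUV.comp measurable_norm measurable_norm
  have hmul : Integrable (fun ω => ‖U ω‖ * ‖V ω‖) μ := hind.integrable_mul hUn hVn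
  refine Integrable.mono' hmul ((hU.inner hV).aestronglyMeasurable) ?_
  exact Filter.Eventually.of_forall fun ω => by
    simpa using abs_real_inner_le_norm (U ω) (V ω)


/-- Pull-out property: `E[⟪G(W), V⟫ | σ(W)] = ⟪G(W), E V⟫` when `V` is independent of `W`. -/
lemma condexp_inner_pull {K : Type*} [MeasurableSpace K] {W : Ω → K} (hW : Measurable W)
    {V : Ω → H} (hV : Measurable V) (hVi : Integrable V μ)
    {G : K → H} (hG : Measurable G) (hGWi : Integrable (fun ω => G (W ω)) μ)
    (hWV : IndepFun W V μ) :
    μ[(fun ω => ⟪G (W ω), V ω⟫) | MeasurableSpace.comap W inferInstance] =ᵐ[μ]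
      fun ω => ⟪G (W ω), ∫ ω', V ω' ∂μ⟫ := by
  have hm : MeasurableSpace.comap W inferInstance ≤ (inferInstance : MeasurableSpace Ω) :=
    hW.comap_le
  set c := ∫ ω', V ω' ∂μ with hc
  -- integrability of the inner product
  have hGWV : IndepFun (fun ω => G (W ω)) V μ := hWV.comp hG measurable_id
  have hfi : Integrable (fun ω => ⟪G (W ω), V ω⟫) μ :=
    integrable_inner_indep (hG.comp hW) hV hGWi.norm hVi.norm hGWV
  -- target is m-measurable
  have hWm : Measurable[MeasurableSpace.comap W inferInstance] W := comap_measurable W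
  have htm : StronglyMeasurable[MeasurableSpace.comap W inferInstance]
      (fun ω => ⟪G (W ω), c⟫) := by
    have : Measurable[MeasurableSpace.comap W inferInstance] (fun ω => ⟪G (W ω), c⟫) :=
      ((hG.inner measurable_const).comp hWm)
    exact this.stronglyMeasurable
  have hti : Integrable (fun ω => ⟪G (W ω), c⟫) μ := by
    refine Integrable.mono' (hGWi.norm.mul_const ‖c‖) ((htm.mono hm).aestronglyMeasurable : AEStronglyMeasurable _ μ) ?_
    exact Filter.Eventually.of_forall fun ω => by
      simpa using abs_real_inner_le_norm (G (W ω)) c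
  refine (ae_eq_condExp_of_forall_setIntegral_eq hm hfi
    (fun s _ _ => hti.integrableOn) (fun s hs _ => ?_) htm.aestronglyMeasurable).symm
  -- the set-integral identity
  obtain ⟨A, hA, rfl⟩ := hs
  set U' : Ω → H := fun ω => (A.indicator G) (W ω) with hU'
  have hU'm : Measurable U' := (hG.indicator hA).comp hW
  have hU'i : Integrable U' μ := by
    have : U' = fun ω => Set.indicator (W ⁻¹' A) (fun ω => G (W ω)) ω := rfl
    rw [this]
    exact hGWi.indicator (hW hA)
  have hU'V : IndepFun U' V μ := hWV.comp (hG.indicator hA) measurable_id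
  have key : ∫ ω, ⟪U' ω, V ω⟫ ∂μ = ⟪∫ ω, U' ω ∂μ, c⟫ :=
    integral_inner_indep hU'm hV hU'i hVi hU'V
  have h1 : ∫ ω in W ⁻¹' A, ⟪G (W ω), V ω⟫ ∂μ = ∫ ω, ⟪U' ω, V ω⟫ ∂μ := by
    rw [← integral_indicator (hW hA)]
    congr 1
    funext ω
    by_cases h : ω ∈ W ⁻¹' A
    · simp only [Set.indicator_of_mem h, hU']
      simp [Set.indicator_of_mem (Set.mem_preimage.mp h)]
    · simp only [Set.indicator_of_notMem h, hU']
      simp [Set.indicator_of_notMem (fun hh => h (Set.mem_preimage.mpr hh))]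
  have h2 : ∫ ω, U' ω ∂μ = ∫ ω in W ⁻¹' A, G (W ω) ∂μ := by
    rw [← integral_indicator (hW hA)]
    congr 1
  have h3 : ∫ ω in W ⁻¹' A, ⟪G (W ω), c⟫ ∂μ = ⟪∫ ω in W ⁻¹' A, G (W ω) ∂μ, c⟫ := by
    rw [show (fun ω => ⟪G (W ω), c⟫) = fun ω => ⟪c, G (W ω)⟫ from
      funext fun ω => real_inner_comm _ _]
    rw [integral_inner hGWi.integrableOn c, real_inner_comm]
  rw [h3, ← h2, ← key, ← h1]


/-- Part (a) in a single Hilbert space. -/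
lemma tTilde2_ae_eq (X : Fin 4 → Ω → H) (hm : ∀ i, Measurable (X i))
    (hindep : iIndepFun X μ)
    (hid : ∀ i, IdentDistrib (X i) (X 0) μ μ)
    (hmom : Integrable (fun ω => ‖X 0 ω‖ ^ 2) μ) :
    tTilde2 μ X =ᵐ[μ]
      fun ω => -2 * ⟪X 0 ω - ∫ ω', X 0 ω' ∂μ, X 1 ω - ∫ ω', X 0 ω' ∂μ⟫ := by
  -- integrability facts
  have hsq : ∀ i, Integrable (fun ω => ‖X i ω‖ ^ 2) μ := fun i => by
    have h := ((hid i).comp (measurable_norm.pow_const 2)).integrable_iff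
    exact h.mpr hmom
  have hnorm : ∀ i, Integrable (fun ω => ‖X i ω‖) μ := fun i => by
    refine Integrable.mono' ((integrable_const (1:ℝ)).add (hsq i))
      ((hm i).norm.aestronglyMeasurable) (Filter.Eventually.of_forall fun ω => ?_)
    have h := norm_nonneg (X i ω)
    have h2 : (((fun _ => (1:ℝ)) + fun ω => ‖X i ω‖ ^ 2) : Ω → ℝ) ω = 1 + ‖X i ω‖ ^ 2 := rfl
    rw [Real.norm_eq_abs, abs_of_nonneg h, h2]
    nlinarith
  have hXi : ∀ i, Integrable (X i) μ := fun i =>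
    (integrable_norm_iff (hm i).aestronglyMeasurable).mp (hnorm i)
  have hmean : ∀ i, ∫ ω, X i ω ∂μ = ∫ ω', X 0 ω' ∂μ := fun i => (hid i).integral_eq
  have hInner : ∀ i j, i ≠ j → Integrable (fun ω => ⟪X i ω, X j ω⟫) μ := fun i j hij =>
    integrable_inner_indep (hm i) (hm j) (hnorm i) (hnorm j) (hindep.indepFun hij)
  have hWm : Measurable (fun ω => (X 0 ω, X 1 ω)) := (hm 0).prodMk (hm 1)
  have hm_le : MeasurableSpace.comap (fun ω => (X 0 ω, X 1 ω)) inferInstance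
      ≤ (inferInstance : MeasurableSpace Ω) := hWm.comap_le
  haveI : SigmaFinite (μ.trim hm_le) := by infer_instance
  -- abbreviations
  set A : Ω → ℝ := fun ω => ⟪X 0 ω, X 1 ω⟫ with hA_def
  set B : Ω → ℝ := fun ω => ⟪X 1 ω, X 2 ω⟫ with hB_def
  set C : Ω → ℝ := fun ω => ⟪X 2 ω, X 3 ω⟫ with hC_def
  set D : Ω → ℝ := fun ω => ⟪X 0 ω, X 3 ω⟫ with hD_def
  -- expansion of hHat2
  have hexp : hHat2 X = (-2:ℝ) • A + ((2:ℝ) • B + ((-2:ℝ) • C + (2:ℝ) • D)) := by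
    funext ω
    simp only [hHat2, Pi.add_apply, Pi.smul_apply, smul_eq_mul, hA_def, hB_def, hC_def, hD_def,
      dist_eq_norm]
    rw [@norm_sub_sq_real, @norm_sub_sq_real, @norm_sub_sq_real, @norm_sub_sq_real,
      real_inner_comm (X 3 ω) (X 0 ω)]
    ring
  have hiA : Integrable A μ := hInner 0 1 (by decide)
  have hiB : Integrable B μ := hInner 1 2 (by decide)
  have hiC : Integrable C μ := hInner 2 3 (by decide)
  have hiD : Integrable D μ := hInner 0 3 (by decide)
  -- individual conditional expectations
  have hA : μ[A|MeasurableSpace.comap (fun ω => (X 0 ω, X 1 ω)) inferInstance] = A :=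
    condExp_of_stronglyMeasurable hm_le
      (((measurable_fst.inner measurable_snd).comp (comap_measurable _)).stronglyMeasurable) hiA
  have hB : μ[B|MeasurableSpace.comap (fun ω => (X 0 ω, X 1 ω)) inferInstance] =ᵐ[μ] fun ω => ⟪X 1 ω, ∫ ω', X 0 ω' ∂μ⟫ := by
    have h := condexp_inner_pull (μ := μ) hWm (hm 2) (hXi 2) (G := Prod.snd) measurable_snd
      (hXi 1) (hindep.indepFun_prodMk hm 0 1 2 (by decide) (by decide))
    rw [hmean 2] at h
    exact h
  have hD : μ[D|MeasurableSpace.comap (fun ω => (X 0 ω, X 1 ω)) inferInstance] =ᵐ[μ] fun ω => ⟪X 0 ω, ∫ ω', X 0 ω' ∂μ⟫ := by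
    have h := condexp_inner_pull (μ := μ) hWm (hm 3) (hXi 3) (G := Prod.fst) measurable_fst
      (hXi 0) (hindep.indepFun_prodMk hm 0 1 3 (by decide) (by decide))
    rw [hmean 3] at h
    exact h
  have hC : μ[C|MeasurableSpace.comap (fun ω => (X 0 ω, X 1 ω)) inferInstance] =ᵐ[μ] fun _ => ⟪∫ ω', X 0 ω' ∂μ, ∫ ω', X 0 ω' ∂μ⟫ := by
    have hsm : StronglyMeasurable[MeasurableSpace.comap (fun ω => (X 2 ω, X 3 ω)) inferInstance]
        C :=
      ((measurable_fst.inner measurable_snd).comp (comap_measurable _)).stronglyMeasurable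
    have hind : Indep (MeasurableSpace.comap (fun ω => (X 2 ω, X 3 ω)) inferInstance) (MeasurableSpace.comap (fun ω => (X 0 ω, X 1 ω)) inferInstance) μ :=
      (IndepFun_iff_Indep _ _ μ).mp
        (hindep.indepFun_prodMk_prodMk hm 2 3 0 1 (by decide) (by decide) (by decide)
          (by decide))
    have h := condExp_indep_eq ((hm 2).prodMk (hm 3)).comap_le hm_le hsm hind
    have hint : ∫ ω, C ω ∂μ = ⟪∫ ω', X 0 ω' ∂μ, ∫ ω', X 0 ω' ∂μ⟫ := by
      rw [show ∫ ω, C ω ∂μ = ∫ ω, ⟪X 2 ω, X 3 ω⟫ ∂μ from rfl]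
      rw [integral_inner_indep (hm 2) (hm 3) (hXi 2) (hXi 3)
        (hindep.indepFun (by decide))]
      rw [hmean 2, hmean 3]
    refine h.trans ?_
    rw [hint]
  -- sum up
  have hsum : μ[hHat2 X|MeasurableSpace.comap (fun ω => (X 0 ω, X 1 ω)) inferInstance] =ᵐ[μ]
      (-2:ℝ) • μ[A|MeasurableSpace.comap (fun ω => (X 0 ω, X 1 ω)) inferInstance] + ((2:ℝ) • μ[B|MeasurableSpace.comap (fun ω => (X 0 ω, X 1 ω)) inferInstance] + ((-2:ℝ) • μ[C|MeasurableSpace.comap (fun ω => (X 0 ω, X 1 ω)) inferInstance] + (2:ℝ) • μ[D|MeasurableSpace.comap (fun ω => (X 0 ω, X 1 ω)) inferInstance])) := by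
    rw [hexp]
    refine (condExp_add (hiA.smul (-2:ℝ))
      ((hiB.smul (2:ℝ)).add ((hiC.smul (-2:ℝ)).add (hiD.smul (2:ℝ)))) _).trans ?_
    refine ((condExp_smul (-2:ℝ) A _).add ?_)
    refine ((condExp_add (hiB.smul (2:ℝ)) ((hiC.smul (-2:ℝ)).add (hiD.smul (2:ℝ))) _).trans ?_)
    refine ((condExp_smul (2:ℝ) B _).add ?_)
    refine ((condExp_add (hiC.smul (-2:ℝ)) (hiD.smul (2:ℝ)) _).trans ?_)
    exact ((condExp_smul (-2:ℝ) C _).add (condExp_smul (2:ℝ) D _))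
  rw [tTilde2]
  refine hsum.trans ?_
  rw [hA]
  filter_upwards [hB, hC, hD] with ω h2 h3 h4
  simp only [Pi.add_apply, Pi.smul_apply, smul_eq_mul, h2, h3, h4, hA_def]
  rw [inner_sub_left, inner_sub_right, inner_sub_right,
    real_inner_comm (∫ ω', X 0 ω' ∂μ) (X 1 ω)]
  ring


end Auxiliary

/-- Let `H₁`, `H₂` be separable real Hilbert spaces and `(X,Y)` a
pair of random variables in `H₁×H₂` with `E‖X‖² < ∞`, `E‖Y‖² < ∞`, and let `(e_i)`,
`(f_j)` be Hilbert bases. Then, for `β = 2`: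
(a) `t̃_X = −2⟪X₁−EX, X₂−EX⟫` a.s. and `t̃_Y = −2⟪Y₁−EY, Y₂−EY⟫` a.s.;
(b) `E[t̃_X t̃_Y] = 4·Σ_{i,j} Cov(⟪X,e_i⟫, ⟪Y,f_j⟫)²`, the double series converging. -/
theorem stmt11 {Ω : Type*} [MeasurableSpace Ω] (μ : Measure Ω) [IsProbabilityMeasure μ]
    {H₁ H₂ : Type*}
    [NormedAddCommGroup H₁] [InnerProductSpace ℝ H₁] [CompleteSpace H₁]
    [SecondCountableTopology H₁] [MeasurableSpace H₁] [BorelSpace H₁]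
    [NormedAddCommGroup H₂] [InnerProductSpace ℝ H₂] [CompleteSpace H₂]
    [SecondCountableTopology H₂] [MeasurableSpace H₂] [BorelSpace H₂]
    {ι κ : Type*} (e : HilbertBasis ι ℝ H₁) (f : HilbertBasis κ ℝ H₂)
    (Z : Ω → H₁ × H₂) (Zs : Fin 4 → Ω → H₁ × H₂)
    (hZm : Measurable Z) (hZsm : ∀ i, Measurable (Zs i))
    (hindep : iIndepFun Zs μ)
    (hid : ∀ i, IdentDistrib (Zs i) Z μ μ)
    (hmomX : Integrable (fun ω => ‖(Z ω).1‖ ^ 2) μ)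
    (hmomY : Integrable (fun ω => ‖(Z ω).2‖ ^ 2) μ) :
    -- (a)
    (tTilde2 μ (fun i ω => (Zs i ω).1) =ᵐ[μ]
        fun ω => -2 * ⟪(Zs 0 ω).1 - ∫ ω', (Z ω').1 ∂μ, (Zs 1 ω).1 - ∫ ω', (Z ω').1 ∂μ⟫) ∧
    (tTilde2 μ (fun i ω => (Zs i ω).2) =ᵐ[μ]
        fun ω => -2 * ⟪(Zs 0 ω).2 - ∫ ω', (Z ω').2 ∂μ, (Zs 1 ω).2 - ∫ ω', (Z ω').2 ∂μ⟫) ∧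
    -- (b)
    Summable (fun ij : ι × κ =>
      ((∫ ω, ⟪(Z ω).1, e ij.1⟫ * ⟪(Z ω).2, f ij.2⟫ ∂μ)
        - (∫ ω, ⟪(Z ω).1, e ij.1⟫ ∂μ) * (∫ ω, ⟪(Z ω).2, f ij.2⟫ ∂μ)) ^ 2) ∧
    (∫ ω, tTilde2 μ (fun i ω => (Zs i ω).1) ω * tTilde2 μ (fun i ω => (Zs i ω).2) ω ∂μ)
      = 4 * ∑' ij : ι × κ,
          ((∫ ω, ⟪(Z ω).1, e ij.1⟫ * ⟪(Z ω).2, f ij.2⟫ ∂μ)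
            - (∫ ω, ⟪(Z ω).1, e ij.1⟫ ∂μ) * (∫ ω, ⟪(Z ω).2, f ij.2⟫ ∂μ)) ^ 2 := by
  classical
  haveI : Countable ι := e.countable_index
  haveI : Countable κ := f.countable_index
  set m := ∫ ω', (Z ω').1 ∂μ with hm_def
  set n := ∫ ω', (Z ω').2 ∂μ with hn_def
  -- part (a), X component
  have hmeanX : ∫ ω', (Zs 0 ω').1 ∂μ = m := ((hid 0).comp measurable_fst).integral_eq
  have hmeanY : ∫ ω', (Zs 0 ω').2 ∂μ = n := ((hid 0).comp measurable_snd).integral_eq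
  have haX : tTilde2 μ (fun i ω => (Zs i ω).1) =ᵐ[μ]
      fun ω => -2 * ⟪(Zs 0 ω).1 - m, (Zs 1 ω).1 - m⟫ := by
    have h := tTilde2_ae_eq (μ := μ) (fun i ω => (Zs i ω).1)
      (fun i => measurable_fst.comp (hZsm i))
      (hindep.comp (fun _ => Prod.fst) (fun _ => measurable_fst))
      (fun i => ((hid i).comp measurable_fst).trans ((hid 0).comp measurable_fst).symm)
      (((hid 0).comp (measurable_fst.norm.pow_const 2)).integrable_iff.mpr hmomX)
    rw [hmeanX] at h
    exact h
  have haY : tTilde2 μ (fun i ω => (Zs i ω).2) =ᵐ[μ]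
      fun ω => -2 * ⟪(Zs 0 ω).2 - n, (Zs 1 ω).2 - n⟫ := by
    have h := tTilde2_ae_eq (μ := μ) (fun i ω => (Zs i ω).2)
      (fun i => measurable_snd.comp (hZsm i))
      (hindep.comp (fun _ => Prod.snd) (fun _ => measurable_snd))
      (fun i => ((hid i).comp measurable_snd).trans ((hid 0).comp measurable_snd).symm)
      (((hid 0).comp (measurable_snd.norm.pow_const 2)).integrable_iff.mpr hmomY)
    rw [hmeanY] at h
    exact h
  -- part (b) setup
  set φ : ι × κ → (H₁ × H₂) → ℝ :=
    fun ij p => ⟪p.1 - m, e ij.1⟫ * ⟪p.2 - n, f ij.2⟫ with hφ_def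
  have hφm : ∀ ij, Measurable (φ ij) := fun ij =>
    ((measurable_fst.sub measurable_const).inner measurable_const).mul
      ((measurable_snd.sub measurable_const).inner measurable_const)
  set g : ι × κ → Ω → ℝ := fun ij ω => φ ij (Zs 0 ω) * φ ij (Zs 1 ω) with hg_def
  -- integrability facts
  have hsqX : ∀ i : Fin 4, Integrable (fun ω => ‖(Zs i ω).1‖ ^ 2) μ := fun i =>
    ((hid i).comp (measurable_fst.norm.pow_const 2)).integrable_iff.mpr hmomX
  have hsqY : ∀ i : Fin 4, Integrable (fun ω => ‖(Zs i ω).2‖ ^ 2) μ := fun i =>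
    ((hid i).comp (measurable_snd.norm.pow_const 2)).integrable_iff.mpr hmomY
  have hXc : ∀ i : Fin 4, Integrable (fun ω => ‖(Zs i ω).1 - m‖ ^ 2) μ := fun i => by
    refine Integrable.mono' (((hsqX i).const_mul 2).add (integrable_const (2 * ‖m‖ ^ 2)))
      ((((measurable_fst.comp (hZsm i)).sub measurable_const).norm.pow_const
        2).aestronglyMeasurable) (Filter.Eventually.of_forall fun ω => ?_)
    have h1 : ‖(Zs i ω).1 - m‖ ≤ ‖(Zs i ω).1‖ + ‖m‖ := norm_sub_le _ _
    have h2 : (0:ℝ) ≤ ‖(Zs i ω).1 - m‖ := norm_nonneg _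
    have h3 : (0:ℝ) ≤ ‖(Zs i ω).1‖ := norm_nonneg _
    have h4 : (0:ℝ) ≤ ‖m‖ := norm_nonneg _
    have h5 : (((fun ω => 2 * ‖(Zs i ω).1‖ ^ 2) + fun _ => 2 * ‖m‖ ^ 2) : Ω → ℝ) ω
        = 2 * ‖(Zs i ω).1‖ ^ 2 + 2 * ‖m‖ ^ 2 := rfl
    rw [Real.norm_eq_abs, abs_of_nonneg (sq_nonneg _), h5]
    nlinarith [mul_self_le_mul_self h2 h1, sq_nonneg (‖(Zs i ω).1‖ - ‖m‖)]
  have hYc : ∀ i : Fin 4, Integrable (fun ω => ‖(Zs i ω).2 - n‖ ^ 2) μ := fun i => by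
    refine Integrable.mono' (((hsqY i).const_mul 2).add (integrable_const (2 * ‖n‖ ^ 2)))
      ((((measurable_snd.comp (hZsm i)).sub measurable_const).norm.pow_const
        2).aestronglyMeasurable) (Filter.Eventually.of_forall fun ω => ?_)
    have h1 : ‖(Zs i ω).2 - n‖ ≤ ‖(Zs i ω).2‖ + ‖n‖ := norm_sub_le _ _
    have h2 : (0:ℝ) ≤ ‖(Zs i ω).2 - n‖ := norm_nonneg _
    have h3 : (0:ℝ) ≤ ‖(Zs i ω).2‖ := norm_nonneg _
    have h4 : (0:ℝ) ≤ ‖n‖ := norm_nonneg _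
    have h5 : (((fun ω => 2 * ‖(Zs i ω).2‖ ^ 2) + fun _ => 2 * ‖n‖ ^ 2) : Ω → ℝ) ω
        = 2 * ‖(Zs i ω).2‖ ^ 2 + 2 * ‖n‖ ^ 2 := rfl
    rw [Real.norm_eq_abs, abs_of_nonneg (sq_nonneg _), h5]
    nlinarith [mul_self_le_mul_self h2 h1, sq_nonneg (‖(Zs i ω).2‖ - ‖n‖)]
  have hXcYc : ∀ i : Fin 4, Integrable (fun ω => ‖(Zs i ω).1 - m‖ * ‖(Zs i ω).2 - n‖) μ :=
    fun i => by
    refine Integrable.mono' (((hXc i).add (hYc i)).div_const 2)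
      ((((measurable_fst.comp (hZsm i)).sub measurable_const).norm.mul
        (((measurable_snd.comp (hZsm i)).sub measurable_const).norm)).aestronglyMeasurable)
      (Filter.Eventually.of_forall fun ω => ?_)
    have h2 : (0:ℝ) ≤ ‖(Zs i ω).1 - m‖ := norm_nonneg _
    have h3 : (0:ℝ) ≤ ‖(Zs i ω).2 - n‖ := norm_nonneg _
    have h5 : (((fun ω => (‖(Zs i ω).1 - m‖ ^ 2 + ‖(Zs i ω).2 - n‖ ^ 2)) : Ω → ℝ) ω) / 2
        = (‖(Zs i ω).1 - m‖ ^ 2 + ‖(Zs i ω).2 - n‖ ^ 2) / 2 := rfl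
    rw [Real.norm_eq_abs, abs_of_nonneg (mul_nonneg h2 h3)]
    show ‖(Zs i ω).1 - m‖ * ‖(Zs i ω).2 - n‖
      ≤ ((fun ω => ‖(Zs i ω).1 - m‖ ^ 2 + ‖(Zs i ω).2 - n‖ ^ 2) ω) / 2
    have h6 : ((fun ω => ‖(Zs i ω).1 - m‖ ^ 2 + ‖(Zs i ω).2 - n‖ ^ 2) ω : ℝ)
        = ‖(Zs i ω).1 - m‖ ^ 2 + ‖(Zs i ω).2 - n‖ ^ 2 := rfl
    rw [h6]
    nlinarith [sq_nonneg (‖(Zs i ω).1 - m‖ - ‖(Zs i ω).2 - n‖)]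
  have hφabs : ∀ (ij : ι × κ) (p : H₁ × H₂),
      |φ ij p| ≤ ‖p.1 - m‖ * ‖p.2 - n‖ := fun ij p => by
    rw [hφ_def, abs_mul]
    have h1 : |⟪p.1 - m, e ij.1⟫| ≤ ‖p.1 - m‖ := by
      have := abs_real_inner_le_norm (p.1 - m) (e ij.1)
      simpa [e.orthonormal.1 ij.1] using this
    have h2 : |⟪p.2 - n, f ij.2⟫| ≤ ‖p.2 - n‖ := by
      have := abs_real_inner_le_norm (p.2 - n) (f ij.2)
      simpa [f.orthonormal.1 ij.2] using this
    exact mul_le_mul h1 h2 (abs_nonneg _) (norm_nonneg _)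
  have hφZs : ∀ (ij : ι × κ) (i : Fin 4), Integrable (fun ω => φ ij (Zs i ω)) μ :=
    fun ij i => by
    refine Integrable.mono' (hXcYc i) (((hφm ij).comp (hZsm i)).aestronglyMeasurable)
      (Filter.Eventually.of_forall fun ω => ?_)
    simpa [Real.norm_eq_abs] using hφabs ij (Zs i ω)
  have hindep01 : IndepFun (Zs 0) (Zs 1) μ := hindep.indepFun (by decide)
  have hgind : ∀ ij : ι × κ,
      IndepFun (fun ω => φ ij (Zs 0 ω)) (fun ω => φ ij (Zs 1 ω)) μ := fun ij =>
    hindep01.comp (hφm ij) (hφm ij)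
  have hgint : ∀ ij : ι × κ, Integrable (g ij) μ := fun ij =>
    (hgind ij).integrable_mul (hφZs ij 0) (hφZs ij 1)
    -- the dominating function
  have hMmeas : Measurable (fun p : H₁ × H₂ => ‖p.1 - m‖ * ‖p.2 - n‖) :=
    (measurable_fst.sub measurable_const).norm.mul (measurable_snd.sub measurable_const).norm
  have hM : Integrable (fun ω =>
      (‖(Zs 0 ω).1 - m‖ * ‖(Zs 1 ω).1 - m‖) * (‖(Zs 0 ω).2 - n‖ * ‖(Zs 1 ω).2 - n‖)) μ := by
    have h01 : IndepFun (fun ω => ‖(Zs 0 ω).1 - m‖ * ‖(Zs 0 ω).2 - n‖)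
        (fun ω => ‖(Zs 1 ω).1 - m‖ * ‖(Zs 1 ω).2 - n‖) μ := hindep01.comp hMmeas hMmeas
    have h := h01.integrable_mul (hXcYc 0) (hXcYc 1)
    refine h.congr (Filter.Eventually.of_forall fun ω => ?_)
    show (‖(Zs 0 ω).1 - m‖ * ‖(Zs 0 ω).2 - n‖) * (‖(Zs 1 ω).1 - m‖ * ‖(Zs 1 ω).2 - n‖) = _
    ring
  -- summability of integrals of norms
  have hsum_int : Summable (fun ij : ι × κ => ∫ ω, ‖g ij ω‖ ∂μ) := by
    refine summable_of_sum_le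
      (c := ∫ ω, (‖(Zs 0 ω).1 - m‖ * ‖(Zs 1 ω).1 - m‖) * (‖(Zs 0 ω).2 - n‖ * ‖(Zs 1 ω).2 - n‖) ∂μ)
      (fun ij => integral_nonneg fun ω => norm_nonneg _) (fun s => ?_)
    have step1 : ∑ ij ∈ s, ∫ ω, ‖g ij ω‖ ∂μ = ∫ ω, ∑ ij ∈ s, ‖g ij ω‖ ∂μ :=
      (integral_finset_sum s fun ij _ => (hgint ij).norm).symm
    rw [step1]
    refine integral_mono (integrable_finset_sum s fun ij _ => (hgint ij).norm) hM fun ω => ?_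
    -- pointwise bound
    have habs : ∀ ij : ι × κ, ‖g ij ω‖ =
        |⟪(Zs 0 ω).1 - m, e ij.1⟫ * ⟪(Zs 1 ω).1 - m, e ij.1⟫| *
        |⟪(Zs 0 ω).2 - n, f ij.2⟫ * ⟪(Zs 1 ω).2 - n, f ij.2⟫| := fun ij => by
      rw [← abs_mul, Real.norm_eq_abs]
      congr 1
      show φ ij (Zs 0 ω) * φ ij (Zs 1 ω) = _
      rw [hφ_def]
      ring
    calc ∑ ij ∈ s, ‖g ij ω‖
        = ∑ ij ∈ s, |⟪(Zs 0 ω).1 - m, e ij.1⟫ * ⟪(Zs 1 ω).1 - m, e ij.1⟫| *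
            |⟪(Zs 0 ω).2 - n, f ij.2⟫ * ⟪(Zs 1 ω).2 - n, f ij.2⟫| :=
          Finset.sum_congr rfl fun ij _ => habs ij
      _ ≤ ∑ ij ∈ (s.image Prod.fst) ×ˢ (s.image Prod.snd),
            |⟪(Zs 0 ω).1 - m, e ij.1⟫ * ⟪(Zs 1 ω).1 - m, e ij.1⟫| *
            |⟪(Zs 0 ω).2 - n, f ij.2⟫ * ⟪(Zs 1 ω).2 - n, f ij.2⟫| := by
          refine Finset.sum_le_sum_of_subset_of_nonneg (fun p hp => ?_)
            (fun p _ _ => mul_nonneg (abs_nonneg _) (abs_nonneg _))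
          exact Finset.mem_product.mpr
            ⟨Finset.mem_image_of_mem _ hp, Finset.mem_image_of_mem _ hp⟩
      _ = (∑ i ∈ s.image Prod.fst, |⟪(Zs 0 ω).1 - m, e i⟫ * ⟪(Zs 1 ω).1 - m, e i⟫|) *
          (∑ j ∈ s.image Prod.snd, |⟪(Zs 0 ω).2 - n, f j⟫ * ⟪(Zs 1 ω).2 - n, f j⟫|) := by
          rw [Finset.sum_mul_sum, Finset.sum_product]
      _ ≤ (‖(Zs 0 ω).1 - m‖ * ‖(Zs 1 ω).1 - m‖) * (‖(Zs 0 ω).2 - n‖ * ‖(Zs 1 ω).2 - n‖) := by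
          refine mul_le_mul (sum_abs_inner_mul_inner_le e _ _ _)
            (sum_abs_inner_mul_inner_le f _ _ _)
            (Finset.sum_nonneg fun j _ => abs_nonneg _)
            (mul_nonneg (norm_nonneg _) (norm_nonneg _))
  -- integrability of pieces over Z
  have hZn1 : Integrable (fun ω => ‖(Z ω).1‖) μ := by
    refine Integrable.mono' ((integrable_const (1:ℝ)).add hmomX)
      ((measurable_fst.comp hZm).norm.aestronglyMeasurable)
      (Filter.Eventually.of_forall fun ω => ?_)
    have h := norm_nonneg (Z ω).1
    have h2 : (((fun _ => (1:ℝ)) + fun ω => ‖(Z ω).1‖ ^ 2) : Ω → ℝ) ω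
        = 1 + ‖(Z ω).1‖ ^ 2 := rfl
    rw [Real.norm_eq_abs, abs_of_nonneg h, h2]
    nlinarith
  have hZn2 : Integrable (fun ω => ‖(Z ω).2‖) μ := by
    refine Integrable.mono' ((integrable_const (1:ℝ)).add hmomY)
      ((measurable_snd.comp hZm).norm.aestronglyMeasurable)
      (Filter.Eventually.of_forall fun ω => ?_)
    have h := norm_nonneg (Z ω).2
    have h2 : (((fun _ => (1:ℝ)) + fun ω => ‖(Z ω).2‖ ^ 2) : Ω → ℝ) ω
        = 1 + ‖(Z ω).2‖ ^ 2 := rfl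
    rw [Real.norm_eq_abs, abs_of_nonneg h, h2]
    nlinarith
  have hZ1 : Integrable (fun ω => (Z ω).1) μ :=
    (integrable_norm_iff (measurable_fst.comp hZm).aestronglyMeasurable).mp hZn1
  have hZ2 : Integrable (fun ω => (Z ω).2) μ :=
    (integrable_norm_iff (measurable_snd.comp hZm).aestronglyMeasurable).mp hZn2
  -- covariance identification
  have hcov : ∀ ij : ι × κ, ∫ ω, φ ij (Z ω) ∂μ =
      (∫ ω, ⟪(Z ω).1, e ij.1⟫ * ⟪(Z ω).2, f ij.2⟫ ∂μ)
        - (∫ ω, ⟪(Z ω).1, e ij.1⟫ ∂μ) * (∫ ω, ⟪(Z ω).2, f ij.2⟫ ∂μ) := by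
    intro ij
    have hA : Integrable (fun ω => ⟪(Z ω).1, e ij.1⟫) μ := by
      refine Integrable.mono' hZn1
        (((measurable_fst.comp hZm).inner measurable_const).aestronglyMeasurable)
        (Filter.Eventually.of_forall fun ω => ?_)
      rw [Real.norm_eq_abs]
      have := abs_real_inner_le_norm (Z ω).1 (e ij.1)
      simpa [e.orthonormal.1 ij.1] using this
    have hB : Integrable (fun ω => ⟪(Z ω).2, f ij.2⟫) μ := by
      refine Integrable.mono' hZn2
        (((measurable_snd.comp hZm).inner measurable_const).aestronglyMeasurable)
        (Filter.Eventually.of_forall fun ω => ?_)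
      rw [Real.norm_eq_abs]
      have := abs_real_inner_le_norm (Z ω).2 (f ij.2)
      simpa [f.orthonormal.1 ij.2] using this
    have hAB : Integrable (fun ω => ⟪(Z ω).1, e ij.1⟫ * ⟪(Z ω).2, f ij.2⟫) μ := by
      refine Integrable.mono' ((hmomX.add hmomY).div_const 2)
        ((((measurable_fst.comp hZm).inner measurable_const).mul
          ((measurable_snd.comp hZm).inner measurable_const)).aestronglyMeasurable)
        (Filter.Eventually.of_forall fun ω => ?_)
      have h1 : |⟪(Z ω).1, e ij.1⟫| ≤ ‖(Z ω).1‖ := by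
        have := abs_real_inner_le_norm (Z ω).1 (e ij.1)
        simpa [e.orthonormal.1 ij.1] using this
      have h2 : |⟪(Z ω).2, f ij.2⟫| ≤ ‖(Z ω).2‖ := by
        have := abs_real_inner_le_norm (Z ω).2 (f ij.2)
        simpa [f.orthonormal.1 ij.2] using this
      have h5 : ((((fun ω => ‖(Z ω).1‖ ^ 2) + fun ω => ‖(Z ω).2‖ ^ 2) : Ω → ℝ) ω) / 2
          = (‖(Z ω).1‖ ^ 2 + ‖(Z ω).2‖ ^ 2) / 2 := rfl
      rw [Real.norm_eq_abs, abs_mul]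
      show |⟪(Z ω).1, e ij.1⟫| * |⟪(Z ω).2, f ij.2⟫|
        ≤ (((fun ω => ‖(Z ω).1‖ ^ 2) + fun ω => ‖(Z ω).2‖ ^ 2) : Ω → ℝ) ω / 2
      rw [h5]
      nlinarith [abs_nonneg ⟪(Z ω).1, e ij.1⟫, abs_nonneg ⟪(Z ω).2, f ij.2⟫,
        norm_nonneg (Z ω).1, norm_nonneg (Z ω).2,
        sq_nonneg (‖(Z ω).1‖ - ‖(Z ω).2‖)]
    have hEA : ∫ ω, ⟪(Z ω).1, e ij.1⟫ ∂μ = ⟪m, e ij.1⟫ := by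
      have h1 : ∫ ω, ⟪(Z ω).1, e ij.1⟫ ∂μ = ∫ ω, ⟪e ij.1, (Z ω).1⟫ ∂μ :=
        integral_congr_ae (Filter.Eventually.of_forall fun ω => real_inner_comm _ _)
      rw [h1, integral_inner hZ1 (e ij.1), real_inner_comm, hm_def]
    have hEB : ∫ ω, ⟪(Z ω).2, f ij.2⟫ ∂μ = ⟪n, f ij.2⟫ := by
      have h1 : ∫ ω, ⟪(Z ω).2, f ij.2⟫ ∂μ = ∫ ω, ⟪f ij.2, (Z ω).2⟫ ∂μ :=
        integral_congr_ae (Filter.Eventually.of_forall fun ω => real_inner_comm _ _)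
      rw [h1, integral_inner hZ2 (f ij.2), real_inner_comm, hn_def]
    have hexp : (fun ω => φ ij (Z ω)) = fun ω =>
        ⟪(Z ω).1, e ij.1⟫ * ⟪(Z ω).2, f ij.2⟫ - ⟪n, f ij.2⟫ * ⟪(Z ω).1, e ij.1⟫
          - ⟪m, e ij.1⟫ * ⟪(Z ω).2, f ij.2⟫ + ⟪m, e ij.1⟫ * ⟪n, f ij.2⟫ := by
      funext ω
      rw [hφ_def]
      show (⟪(Z ω).1 - m, e ij.1⟫) * (⟪(Z ω).2 - n, f ij.2⟫) = _
      rw [inner_sub_left, inner_sub_left]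
      ring
    have hiA' : Integrable (fun ω => ⟪n, f ij.2⟫ * ⟪(Z ω).1, e ij.1⟫) μ :=
      hA.const_mul (⟪n, f ij.2⟫ : ℝ)
    have hiB' : Integrable (fun ω => ⟪m, e ij.1⟫ * ⟪(Z ω).2, f ij.2⟫) μ :=
      hB.const_mul (⟪m, e ij.1⟫ : ℝ)
    have hsub2 : Integrable (fun ω => ⟪(Z ω).1, e ij.1⟫ * ⟪(Z ω).2, f ij.2⟫
        - ⟪n, f ij.2⟫ * ⟪(Z ω).1, e ij.1⟫) μ := hAB.sub hiA'
    have hsub1 : Integrable (fun ω => ⟪(Z ω).1, e ij.1⟫ * ⟪(Z ω).2, f ij.2⟫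
        - ⟪n, f ij.2⟫ * ⟪(Z ω).1, e ij.1⟫ - ⟪m, e ij.1⟫ * ⟪(Z ω).2, f ij.2⟫) μ :=
      hsub2.sub hiB'
    rw [hexp, integral_add hsub1 (integrable_const _), integral_sub hsub2 hiB',
      integral_sub hAB hiA', integral_const_mul, integral_const_mul, integral_const,
      hEA, hEB]
    simp [measure_univ]
    ring
  -- per-term integral
  have hgij : ∀ ij : ι × κ, ∫ ω, g ij ω ∂μ =
      ((∫ ω, ⟪(Z ω).1, e ij.1⟫ * ⟪(Z ω).2, f ij.2⟫ ∂μ)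
        - (∫ ω, ⟪(Z ω).1, e ij.1⟫ ∂μ) * (∫ ω, ⟪(Z ω).2, f ij.2⟫ ∂μ)) ^ 2 := by
    intro ij
    have h1 : ∫ ω, g ij ω ∂μ
        = (∫ ω, φ ij (Zs 0 ω) ∂μ) * ∫ ω, φ ij (Zs 1 ω) ∂μ :=
      (hgind ij).integral_mul_eq_mul_integral ((hφm ij).comp (hZsm 0)).aestronglyMeasurable
        ((hφm ij).comp (hZsm 1)).aestronglyMeasurable
    have h2 : ∀ i : Fin 4, ∫ ω, φ ij (Zs i ω) ∂μ = ∫ ω, φ ij (Z ω) ∂μ := fun i =>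
      ((hid i).comp (hφm ij)).integral_eq
    rw [h1, h2 0, h2 1, hcov ij]
    ring
  -- summability of the covariance series
  have htarget_le : ∀ ij : ι × κ,
      ((∫ ω, ⟪(Z ω).1, e ij.1⟫ * ⟪(Z ω).2, f ij.2⟫ ∂μ)
        - (∫ ω, ⟪(Z ω).1, e ij.1⟫ ∂μ) * (∫ ω, ⟪(Z ω).2, f ij.2⟫ ∂μ)) ^ 2
        ≤ ∫ ω, ‖g ij ω‖ ∂μ := fun ij => by
    rw [← hgij ij]
    refine integral_mono (hgint ij) (hgint ij).norm fun ω => ?_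
    rw [Real.norm_eq_abs]
    exact le_abs_self _
  have hsummable : Summable (fun ij : ι × κ =>
      ((∫ ω, ⟪(Z ω).1, e ij.1⟫ * ⟪(Z ω).2, f ij.2⟫ ∂μ)
        - (∫ ω, ⟪(Z ω).1, e ij.1⟫ ∂μ) * (∫ ω, ⟪(Z ω).2, f ij.2⟫ ∂μ)) ^ 2) :=
    Summable.of_nonneg_of_le (fun ij => sq_nonneg _) htarget_le hsum_int
  refine ⟨haX, haY, hsummable, ?_⟩
  -- pointwise expansion of the product of inner products
  have hpt : ∀ ω, ⟪(Zs 0 ω).1 - m, (Zs 1 ω).1 - m⟫ * ⟪(Zs 0 ω).2 - n, (Zs 1 ω).2 - n⟫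
      = ∑' ij : ι × κ, g ij ω := fun ω => by
    have hx : ⟪(Zs 0 ω).1 - m, (Zs 1 ω).1 - m⟫
        = ∑' i, ⟪(Zs 0 ω).1 - m, e i⟫ * ⟪(Zs 1 ω).1 - m, e i⟫ :=
      ((e.tsum_inner_mul_inner ((Zs 0 ω).1 - m) ((Zs 1 ω).1 - m)).symm).trans
        (tsum_congr fun i => by rw [real_inner_comm ((Zs 1 ω).1 - m) (e i)])
    have hy : ⟪(Zs 0 ω).2 - n, (Zs 1 ω).2 - n⟫
        = ∑' j, ⟪(Zs 0 ω).2 - n, f j⟫ * ⟪(Zs 1 ω).2 - n, f j⟫ :=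
      ((f.tsum_inner_mul_inner ((Zs 0 ω).2 - n) ((Zs 1 ω).2 - n)).symm).trans
        (tsum_congr fun j => by rw [real_inner_comm ((Zs 1 ω).2 - n) (f j)])
    have hsx : Summable fun i => ‖⟪(Zs 0 ω).1 - m, e i⟫ * ⟪(Zs 1 ω).1 - m, e i⟫‖ := by
      simp only [Real.norm_eq_abs]
      exact summable_abs_inner_mul_inner e ((Zs 0 ω).1 - m) ((Zs 1 ω).1 - m)
    have hsy : Summable fun j => ‖⟪(Zs 0 ω).2 - n, f j⟫ * ⟪(Zs 1 ω).2 - n, f j⟫‖ := by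
      simp only [Real.norm_eq_abs]
      exact summable_abs_inner_mul_inner f ((Zs 0 ω).2 - n) ((Zs 1 ω).2 - n)
    rw [hx, hy, tsum_mul_tsum_of_summable_norm hsx hsy]
    refine tsum_congr fun ij => ?_
    show _ = φ ij (Zs 0 ω) * φ ij (Zs 1 ω)
    rw [hφ_def]
    ring
  -- final computation
  calc ∫ ω, tTilde2 μ (fun i ω => (Zs i ω).1) ω * tTilde2 μ (fun i ω => (Zs i ω).2) ω ∂μ
      = ∫ ω, 4 * (⟪(Zs 0 ω).1 - m, (Zs 1 ω).1 - m⟫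
          * ⟪(Zs 0 ω).2 - n, (Zs 1 ω).2 - n⟫) ∂μ := by
        refine integral_congr_ae ?_
        filter_upwards [haX, haY] with ω h1 h2
        rw [h1, h2]
        ring
    _ = ∫ ω, 4 * ∑' ij : ι × κ, g ij ω ∂μ := by
        refine integral_congr_ae (Filter.Eventually.of_forall fun ω => ?_)
        simp only [hpt]
    _ = 4 * ∫ ω, ∑' ij : ι × κ, g ij ω ∂μ := integral_const_mul 4 _
    _ = 4 * ∑' ij : ι × κ, ∫ ω, g ij ω ∂μ := by
        rw [integral_tsum_of_summable_integral_norm hgint hsum_int]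
    _ = 4 * ∑' ij : ι × κ,
          ((∫ ω, ⟪(Z ω).1, e ij.1⟫ * ⟪(Z ω).2, f ij.2⟫ ∂μ)
            - (∫ ω, ⟪(Z ω).1, e ij.1⟫ ∂μ) * (∫ ω, ⟪(Z ω).2, f ij.2⟫ ∂μ)) ^ 2 := by
        rw [tsum_congr hgij]
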